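/- Let p be an odd prime and let A be the (p-1) x (p-1) matrix over F_p with entries A_{ij} = (p-i)^{p-j} for 1 \le i, j \le p-1, and let B be the matrix with entries B_{ij} = (p-j)^{i-1}. Then A \cdot B = -I, where I is the identity matrix of order p-1. -/
import Mathlib


/-- For an odd prime `p`, the `(p-1)×(p-1)` matrices over `F_p` with entries
`A_{ij} = (p-i)^{p-j}` and `B_{ij} = (p-j)^{i-1}` (indices `1 ≤ i, j ≤ p-1`)
satisfy `A·B = -I`. -/
theorem matrix_mul_eq_neg_one (p : ℕ) (hp : p.Prime) (hodd : Odd p) :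
    (Matrix.of fun i j : Fin (p - 1) =>
        ((p - (i.val + 1) : ℕ) : ZMod p) ^ (p - (j.val + 1))) *
      (Matrix.of fun i j : Fin (p - 1) =>
        ((p - (j.val + 1) : ℕ) : ZMod p) ^ i.val) = -1 := by
  have fact : Fact p.Prime := ⟨hp⟩
  have hp2 : 2 ≤ p := hp.two_le
  ext i j
  simp only [Matrix.mul_apply, Matrix.of_apply, Matrix.neg_apply, Matrix.one_apply]
  set a : ZMod p := ((p - (i.val + 1) : ℕ) : ZMod p) with ha_def
  set b : ZMod p := ((p - (j.val + 1) : ℕ) : ZMod p) with hb_def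
  have hi : i.val < p - 1 := i.isLt
  have hj : j.val < p - 1 := j.isLt
  have ha : a ≠ 0 := by
    rw [ha_def, Ne, ZMod.natCast_eq_zero_iff]
    intro h
    have := Nat.le_of_dvd (by omega) h
    omega
  have hb : b ≠ 0 := by
    rw [hb_def, Ne, ZMod.natCast_eq_zero_iff]
    intro h
    have := Nat.le_of_dvd (by omega) h
    omega
  have key : ∀ k : Fin (p-1),
      a ^ (p - (k.val + 1)) * b ^ k.val = a * (b ^ k.val * a ^ (p - 1 - 1 - k.val)) := by
    intro k
    have hk : k.val < p - 1 := k.isLt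
    have : p - (k.val + 1) = (p - 1 - 1 - k.val) + 1 := by omega
    rw [this, pow_succ]
    ring
  rcases eq_or_ne i j with rfl | hij
  · simp only [if_pos rfl]
    have : ∀ k : Fin (p-1), a ^ (p - (k.val + 1)) * a ^ k.val = 1 := by
      intro k
      rw [← pow_add]
      have : p - (k.val + 1) + k.val = p - 1 := by omega
      rw [this, ZMod.pow_card_sub_one_eq_one ha]
    rw [Finset.sum_congr rfl fun k _ => this k]
    simp only [Finset.sum_const, Finset.card_univ, Fintype.card_fin, smul_eq_mul, mul_one]
    have : ((p - 1 : ℕ) : ZMod p) = -1 := by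
      have : ((p : ℕ) : ZMod p) = 0 := ZMod.natCast_self p
      push_cast [Nat.cast_sub (by omega : 1 ≤ p)]
      simp
    simpa using this
  · rw [if_neg hij]
    have hab : a ≠ b := by
      intro h
      apply hij
      have hia : (p - (i.val + 1)) < p := by omega
      have hjb : (p - (j.val + 1)) < p := by omega
      have := ZMod.val_natCast_of_lt hia
      have := ZMod.val_natCast_of_lt hjb
      have : p - (i.val + 1) = p - (j.val + 1) := by
        rw [← ZMod.val_natCast_of_lt hia, ← ZMod.val_natCast_of_lt hjb, ← ha_def, ← hb_def, h]
      exact Fin.ext (by omega)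
    rw [Finset.sum_congr rfl fun k _ => key k, ← Finset.mul_sum]
    rw [Fin.sum_univ_eq_sum_range (fun k => b ^ k * a ^ (p - 1 - 1 - k))]
    have := geom_sum₂_mul b a (p - 1)
    have hba : b - a ≠ 0 := sub_ne_zero.mpr (Ne.symm hab)
    have hsum : (∑ k ∈ Finset.range (p-1), b ^ k * a ^ (p - 1 - 1 - k)) = 0 := by
      have h2 : (∑ k ∈ Finset.range (p-1), b ^ k * a ^ (p - 1 - 1 - k)) * (b - a)
          = b ^ (p-1) - a ^ (p-1) := geom_sum₂_mul b a (p - 1)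
      rw [ZMod.pow_card_sub_one_eq_one ha, ZMod.pow_card_sub_one_eq_one hb, sub_self] at h2
      exact (mul_eq_zero.mp h2).resolve_right hba
    rw [hsum, mul_zero, neg_zero]
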